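/- arXiv:1803.09804 — 2 statements merged into one kernel-verified Lean document; each statement's English description precedes it below -/
import Mathlib

section
/- Let R be the free noncommutative F-algebra on two generators X₁, X₂ over F = ℚ(A), with the endomorphisms T₁, T₂ and the two-sided ideal J as above. Then for k ∈ {1,2}, the element (T₁T₂T₁)²(X_k) − X_k = T₁T₂T₁T₁T₂T₁(X_k) − X_k belongs to J; that is, the relation (T₁T₂T₁)²(X_k) = X_k holds in the quotient algebra B = R/J (the last two defining relations of the paper's presentation are implied by the first two). -/
/-- `F = ℚ(A)`, the field of rational functions in one variable over `ℚ`. -/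
noncomputable abbrev F : Type := RatFunc ℚ

/-- The variable `A ∈ ℚ(A)`. -/
noncomputable def A : F := RatFunc.X

/-- The deformed bracket `[x,y]_A = A·(x*y) − A⁻¹·(y*x)` in an `F`-algebra. -/
noncomputable def brA {S : Type*} [Ring S] [Algebra F S] (x y : S) : S :=
  A • (x * y) - A⁻¹ • (y * x)

/-- `R`, the free noncommutative `F`-algebra on two generators. -/
noncomputable abbrev R : Type := FreeAlgebra F (Fin 2)

/-- The first generator `X₁`. -/
noncomputable def X1 : R := FreeAlgebra.ι F 0

/-- The second generator `X₂`. -/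
noncomputable def X2 : R := FreeAlgebra.ι F 1

/-- The generators as a function on `Fin 2`. -/
noncomputable def X : Fin 2 → R := ![X1, X2]

/-- `T₁ : X₁ ↦ X₁, X₂ ↦ [X₁,X₂]_A`. -/
noncomputable def T1 : R →ₐ[F] R := FreeAlgebra.lift F ![X1, brA X1 X2]

/-- `T₁⁻ : X₁ ↦ X₁, X₂ ↦ [X₂,X₁]_A`. -/
noncomputable def T1inv : R →ₐ[F] R := FreeAlgebra.lift F ![X1, brA X2 X1]

/-- `T₂ : X₁ ↦ [X₂,X₁]_A, X₂ ↦ X₂`. -/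
noncomputable def T2 : R →ₐ[F] R := FreeAlgebra.lift F ![brA X2 X1, X2]

/-- `T₂⁻ : X₁ ↦ [X₁,X₂]_A, X₂ ↦ X₂`. -/
noncomputable def T2inv : R →ₐ[F] R := FreeAlgebra.lift F ![brA X1 X2, X2]

/-- The two-sided ideal `J` generated by `[[X₁,X₂]_A, X₁]_A − X₂` and
`[[X₂,X₁]_A, X₂]_A − X₁`. -/
noncomputable def J : TwoSidedIdeal R :=
  TwoSidedIdeal.span {brA (brA X1 X2) X1 - X2, brA (brA X2 X1) X2 - X1}

/-! ### Auxiliary generic bracket identities -/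

/-- A generic version of the bracket with two independent scalars. -/
noncomputable def gbr {K : Type*} {S : Type*} [CommRing K] [Ring S] [Algebra K S]
    (u v : K) (x y : S) : S := u • (x * y) - v • (y * x)

section Generic

variable {K : Type*} {S : Type*} [CommRing K] [Ring S] [Algebra K S] (u v : K) (a b : S)

lemma gen1 :
    gbr u v (gbr u v a (gbr u v a b)) a - gbr u v a b =
      u • (a * (gbr u v (gbr u v a b) a - b)) - v • ((gbr u v (gbr u v a b) a - b) * a) := by
  simp only [gbr, smul_sub, smul_smul, mul_sub, sub_mul, smul_mul_assoc, mul_smul_comm, mul_assoc]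
  match_scalars <;> ring

lemma gen2 :
    gbr u v (gbr u v (gbr u v a b) a) (gbr u v a b) - a =
      (gbr u v (gbr u v b a) b - a) +
        (u • ((gbr u v (gbr u v a b) a - b) * gbr u v a b)
          - v • (gbr u v a b * (gbr u v (gbr u v a b) a - b))) := by
  simp only [gbr, smul_sub, smul_smul, mul_sub, sub_mul, smul_mul_assoc, mul_smul_comm, mul_assoc]
  match_scalars <;> ring

end Generic

lemma brA_eq_gbr {S : Type*} [Ring S] [Algebra F S] (x y : S) :
    brA x y = gbr A A⁻¹ x y := rfl

/-- The first generator of `J`. -/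
noncomputable def g1 : R := brA (brA X1 X2) X1 - X2

/-- The second generator of `J`. -/
noncomputable def g2 : R := brA (brA X2 X1) X2 - X1

lemma g1_mem : g1 ∈ J := TwoSidedIdeal.subset_span (Set.mem_insert _ _)

lemma g2_mem : g2 ∈ J := TwoSidedIdeal.subset_span (Set.mem_insert_of_mem _ rfl)

lemma smul_mem_J (c : F) {x : R} (hx : x ∈ J) : c • x ∈ J := by
  rw [Algebra.smul_def]; exact J.mul_mem_left _ _ hx

lemma T1_X1 : T1 X1 = X1 := by simp [T1, X1]
lemma T1_X2 : T1 X2 = brA X1 X2 := by simp [T1, X2]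
lemma T2_X1 : T2 X1 = brA X2 X1 := by simp [T2, X1]
lemma T2_X2 : T2 X2 = X2 := by simp [T2, X2]

lemma map_brA (φ : R →ₐ[F] R) (x y : R) : φ (brA x y) = brA (φ x) (φ y) := by
  simp [brA]

lemma key1 : T1 g1 = A • (X1 * g1) - A⁻¹ • (g1 * X1) := by
  simp only [g1, map_sub, map_brA, T1_X1, T1_X2]
  simp only [brA_eq_gbr]
  exact gen1 A A⁻¹ X1 X2

lemma key2 : T1 g2 = g2 + (A • (g1 * brA X1 X2) - A⁻¹ • (brA X1 X2 * g1)) := by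
  simp only [g1, g2, map_sub, map_brA, T1_X1, T1_X2]
  simp only [brA_eq_gbr]
  exact gen2 A A⁻¹ X1 X2

lemma key3 : T2 g2 = A • (X2 * g2) - A⁻¹ • (g2 * X2) := by
  simp only [g2, map_sub, map_brA, T2_X1, T2_X2]
  simp only [brA_eq_gbr]
  exact gen1 A A⁻¹ X2 X1

lemma key4 : T2 g1 = g1 + (A • (g2 * brA X2 X1) - A⁻¹ • (brA X2 X1 * g2)) := by
  simp only [g1, g2, map_sub, map_brA, T2_X1, T2_X2]
  simp only [brA_eq_gbr]
  exact gen2 A A⁻¹ X2 X1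

lemma T1g1_mem : T1 g1 ∈ J := by
  rw [key1]
  exact J.sub_mem (smul_mem_J _ (J.mul_mem_left _ _ g1_mem))
    (smul_mem_J _ (J.mul_mem_right _ _ g1_mem))

lemma T1g2_mem : T1 g2 ∈ J := by
  rw [key2]
  exact J.add_mem g2_mem <| J.sub_mem (smul_mem_J _ (J.mul_mem_right _ _ g1_mem))
    (smul_mem_J _ (J.mul_mem_left _ _ g1_mem))

lemma T2g2_mem : T2 g2 ∈ J := by
  rw [key3]
  exact J.sub_mem (smul_mem_J _ (J.mul_mem_left _ _ g2_mem))
    (smul_mem_J _ (J.mul_mem_right _ _ g2_mem))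

lemma T2g1_mem : T2 g1 ∈ J := by
  rw [key4]
  exact J.add_mem g1_mem <| J.sub_mem (smul_mem_J _ (J.mul_mem_right _ _ g2_mem))
    (smul_mem_J _ (J.mul_mem_left _ _ g2_mem))

lemma map_J (φ : R →ₐ[F] R) (h1 : φ g1 ∈ J) (h2 : φ g2 ∈ J) {x : R} (hx : x ∈ J) :
    φ x ∈ J := by
  have key : x ∈ TwoSidedIdeal.comap φ J := by
    refine TwoSidedIdeal.mem_span_iff.mp hx _ ?_
    rintro y (rfl | rfl)
    · simp only [SetLike.mem_coe, TwoSidedIdeal.mem_comap]; exact h1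
    · simp only [SetLike.mem_coe, TwoSidedIdeal.mem_comap]; exact h2
  rwa [TwoSidedIdeal.mem_comap] at key

lemma e1 : T1 (T2 (T1 X1)) = g1 + X2 := by
  rw [T1_X1, T2_X1, map_brA, T1_X1, T1_X2, g1, sub_add_cancel]

lemma e2 : T1 (T2 (T1 X2)) = T1 g2 + X1 := by
  rw [T1_X2, map_brA, T2_X1, T2_X2, show brA (brA X2 X1) X2 = g2 + X1 by rw [g2, sub_add_cancel],
    map_add, T1_X1]

/-- The relation `(T₁T₂T₁)²(X_k) = X_k` holds in the quotient `B = R/J`. -/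
theorem central_relation_mem (k : Fin 2) :
    T1 (T2 (T1 (T1 (T2 (T1 (X k)))))) - X k ∈ J := by
  have hT1 : ∀ {x : R}, x ∈ J → T1 x ∈ J := fun hx => map_J T1 T1g1_mem T1g2_mem hx
  have hT2 : ∀ {x : R}, x ∈ J → T2 x ∈ J := fun hx => map_J T2 T2g1_mem T2g2_mem hx
  fin_cases k
  · show T1 (T2 (T1 (T1 (T2 (T1 (X 0)))))) - X 0 ∈ J
    have hX : X 0 = X1 := rfl
    rw [hX, e1]
    have : T1 (T2 (T1 (g1 + X2))) - X1 = T1 (T2 (T1 g1)) + T1 g2 := by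
      rw [map_add, map_add, map_add, e2]; abel
    rw [this]
    exact J.add_mem (hT1 (hT2 (hT1 g1_mem))) T1g2_mem
  · show T1 (T2 (T1 (T1 (T2 (T1 (X 1)))))) - X 1 ∈ J
    have hX : X 1 = X2 := rfl
    rw [hX, e2]
    have : T1 (T2 (T1 (T1 g2 + X1))) - X2 = T1 (T2 (T1 (T1 g2))) + g1 := by
      rw [map_add, map_add, map_add, e1]; abel
    rw [this]
    exact J.add_mem (hT1 (hT2 (hT1 T1g2_mem))) g1_mem
end

section
/- Let R be the free noncommutative F-algebra on two generators X₁, X₂ over F = ℚ(A), with the endomorphisms T₁, T₁⁻, T₂, T₂⁻ and the two-sided ideal J as above. Then for every x ∈ R, the elements T₁(T₁⁻(x)) − x, T₁⁻(T₁(x)) − x, T₂(T₂⁻(x)) − x and T₂⁻(T₂(x)) − x all belong to J. Consequently, the induced endomorphisms τ₁ and τ₂ of B = R/J are F-algebra automorphisms of B, with inverses induced by T₁⁻ and T₂⁻ respectively. -/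
/-- The quotient algebra `B = R/J`. -/
noncomputable abbrev B : Type := RingQuot (fun x y : R => x - y ∈ J)

/-- The quotient map `π : R → B` as an `F`-algebra homomorphism. -/
noncomputable def pi : R →ₐ[F] B := RingQuot.mkAlgHom F (fun x y : R => x - y ∈ J)

lemma hA : A ≠ 0 := RatFunc.X_ne_zero

lemma brA_sub_left {S : Type*} [Ring S] [Algebra F S] (x y c : S) :
    brA (x - y) c = brA x c - brA y c := by
  simp only [brA, sub_mul, mul_sub, smul_sub]; abel

lemma brA_sub_right {S : Type*} [Ring S] [Algebra F S] (c x y : S) :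
    brA c (x - y) = brA c x - brA c y := by
  simp only [brA, sub_mul, mul_sub, smul_sub]; abel

lemma brA_rot {S : Type*} [Ring S] [Algebra F S] (a b : S) :
    brA (brA a b) a = brA a (brA b a) := by
  simp only [brA, smul_sub, sub_mul, mul_sub, smul_mul_assoc, mul_smul_comm, smul_smul,
    mul_inv_cancel₀ hA, inv_mul_cancel₀ hA, one_smul, mul_assoc]
  abel

lemma J_brA_left {j : R} (h : j ∈ J) (y : R) : brA j y ∈ J := by
  unfold brA
  refine J.sub_mem ?_ ?_ <;> rw [Algebra.smul_def]
  · exact J.mul_mem_left _ _ (J.mul_mem_right _ _ h)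
  · exact J.mul_mem_left _ _ (J.mul_mem_left _ _ h)

lemma J_brA_right {j : R} (h : j ∈ J) (y : R) : brA y j ∈ J := by
  unfold brA
  refine J.sub_mem ?_ ?_ <;> rw [Algebra.smul_def]
  · exact J.mul_mem_left _ _ (J.mul_mem_left _ _ h)
  · exact J.mul_mem_left _ _ (J.mul_mem_right _ _ h)

lemma hg1 : brA (brA X1 X2) X1 - X2 ∈ J :=
  TwoSidedIdeal.subset_span (Or.inl rfl)

lemma hg2 : brA (brA X2 X1) X2 - X1 ∈ J :=
  TwoSidedIdeal.subset_span (Or.inr rfl)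

lemma key1_s10 (a b : R) (h1 : brA (brA a b) a - b ∈ J) :
    brA (brA a (brA a b)) a - brA a b ∈ J := by
  rw [brA_rot a (brA a b), ← brA_sub_right]
  exact J_brA_right h1 a

lemma key2_s10 (a b : R) (h1 : brA (brA a b) a - b ∈ J) (h2 : brA (brA b a) b - a ∈ J) :
    brA (brA (brA a b) a) (brA a b) - a ∈ J := by
  have e1 : brA (brA (brA a b) a) (brA a b) - brA b (brA a b) ∈ J := by
    rw [← brA_sub_left]; exact J_brA_left h1 _
  have e2 : brA b (brA a b) - a ∈ J := by rw [← brA_rot b a]; exact h2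
  have := J.add_mem e1 e2
  rwa [sub_add_sub_cancel] at this

lemma key3_s10 (a b : R) (h1 : brA (brA a b) a - b ∈ J) :
    brA (brA a (brA b a)) a - brA b a ∈ J := by
  rw [← brA_sub_left, ← brA_rot a b]
  exact J_brA_left h1 a

lemma key4_s10 (a b : R) (h1 : brA (brA a b) a - b ∈ J) (h2 : brA (brA b a) b - a ∈ J) :
    brA (brA (brA b a) a) (brA b a) - a ∈ J := by
  have e1 : brA (brA (brA b a) a) (brA b a) - brA (brA b a) b ∈ J := by
    rw [brA_rot (brA b a) a, ← brA_sub_right, ← brA_rot a b]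
    exact J_brA_right h1 _
  have := J.add_mem e1 h2
  rwa [sub_add_sub_cancel] at this

lemma T1inv_X1 : T1inv X1 = X1 := by simp [T1inv, X1, FreeAlgebra.lift_ι_apply]
lemma T1inv_X2 : T1inv X2 = brA X2 X1 := by simp [T1inv, X2, FreeAlgebra.lift_ι_apply]
lemma T2inv_X1 : T2inv X1 = brA X1 X2 := by simp [T2inv, X1, FreeAlgebra.lift_ι_apply]
lemma T2inv_X2 : T2inv X2 = X2 := by simp [T2inv, X2, FreeAlgebra.lift_ι_apply]

/-- J-invariance from images of the two generators of J. -/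
lemma mapsJ (φ : R →ₐ[F] R) (h1 : φ (brA (brA X1 X2) X1 - X2) ∈ J)
    (h2 : φ (brA (brA X2 X1) X2 - X1) ∈ J) {x : R} (hx : x ∈ J) : φ x ∈ J := by
  have hx' : x ∈ TwoSidedIdeal.span {brA (brA X1 X2) X1 - X2, brA (brA X2 X1) X2 - X1} := hx
  rw [TwoSidedIdeal.mem_span_iff] at hx'
  refine (TwoSidedIdeal.mem_comap φ).mp (hx' (TwoSidedIdeal.comap φ J) ?_)
  rintro g (rfl | rfl) <;> rw [SetLike.mem_coe, TwoSidedIdeal.mem_comap φ]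
  · exact h1
  · exact h2

lemma T1_J {x : R} (hx : x ∈ J) : T1 x ∈ J := by
  refine mapsJ T1 ?_ ?_ hx
  · rw [map_sub, map_brA, map_brA, T1_X1, T1_X2]
    exact key1_s10 X1 X2 hg1
  · rw [map_sub, map_brA, map_brA, T1_X1, T1_X2]
    exact key2_s10 X1 X2 hg1 hg2

lemma T1inv_J {x : R} (hx : x ∈ J) : T1inv x ∈ J := by
  refine mapsJ T1inv ?_ ?_ hx
  · rw [map_sub, map_brA, map_brA, T1inv_X1, T1inv_X2]
    exact key3_s10 X1 X2 hg1
  · rw [map_sub, map_brA, map_brA, T1inv_X1, T1inv_X2]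
    exact key4_s10 X1 X2 hg1 hg2

lemma T2_J {x : R} (hx : x ∈ J) : T2 x ∈ J := by
  refine mapsJ T2 ?_ ?_ hx
  · rw [map_sub, map_brA, map_brA, T2_X1, T2_X2]
    exact key2_s10 X2 X1 hg2 hg1
  · rw [map_sub, map_brA, map_brA, T2_X1, T2_X2]
    exact key1_s10 X2 X1 hg2

lemma T2inv_J {x : R} (hx : x ∈ J) : T2inv x ∈ J := by
  refine mapsJ T2inv ?_ ?_ hx
  · rw [map_sub, map_brA, map_brA, T2inv_X1, T2inv_X2]
    exact key4_s10 X2 X1 hg2 hg1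
  · rw [map_sub, map_brA, map_brA, T2inv_X1, T2inv_X2]
    exact key3_s10 X2 X1 hg2

/-- Pointwise: a hom agreeing with the identity mod J on generators agrees mod J everywhere. -/
lemma sub_mem_J (φ : R →ₐ[F] R) (h0 : φ X1 - X1 ∈ J) (h1 : φ X2 - X2 ∈ J) (x : R) :
    φ x - x ∈ J := by
  induction x using FreeAlgebra.induction with
  | grade0 r => rw [AlgHom.commutes, sub_self]; exact J.zero_mem
  | grade1 i =>
      fin_cases i
      · exact h0
      · exact h1
  | mul x y hx hy =>
      have : φ (x * y) - x * y = φ x * (φ y - y) + (φ x - x) * y := by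
        rw [map_mul, mul_sub, sub_mul]; abel
      rw [this]
      exact J.add_mem (J.mul_mem_left _ _ hy) (J.mul_mem_right _ _ hx)
  | add x y hx hy =>
      have : φ (x + y) - (x + y) = (φ x - x) + (φ y - y) := by rw [map_add]; abel
      rw [this]
      exact J.add_mem hx hy

lemma part1 : ∀ x : R, T1 (T1inv x) - x ∈ J ∧ T1inv (T1 x) - x ∈ J ∧
    T2 (T2inv x) - x ∈ J ∧ T2inv (T2 x) - x ∈ J := by
  intro x
  refine ⟨sub_mem_J (T1.comp T1inv) ?_ ?_ x, sub_mem_J (T1inv.comp T1) ?_ ?_ x,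
    sub_mem_J (T2.comp T2inv) ?_ ?_ x, sub_mem_J (T2inv.comp T2) ?_ ?_ x⟩
  · rw [AlgHom.comp_apply, T1inv_X1, T1_X1, sub_self]; exact J.zero_mem
  · rw [AlgHom.comp_apply, T1inv_X2, map_brA, T1_X1, T1_X2]; exact hg1
  · rw [AlgHom.comp_apply, T1_X1, T1inv_X1, sub_self]; exact J.zero_mem
  · rw [AlgHom.comp_apply, T1_X2, map_brA, T1inv_X1, T1inv_X2, ← brA_rot X1 X2]; exact hg1
  · rw [AlgHom.comp_apply, T2inv_X1, map_brA, T2_X1, T2_X2]; exact hg2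
  · rw [AlgHom.comp_apply, T2inv_X2, T2_X2, sub_self]; exact J.zero_mem
  · rw [AlgHom.comp_apply, T2_X1, map_brA, T2inv_X1, T2inv_X2, ← brA_rot X2 X1]; exact hg2
  · rw [AlgHom.comp_apply, T2_X2, T2inv_X2, sub_self]; exact J.zero_mem

/-- Induced maps on B. -/
noncomputable def tau (φ : R →ₐ[F] R) (hφ : ∀ {x : R}, x ∈ J → φ x ∈ J) : B →ₐ[F] B :=
  RingQuot.liftAlgHom F ⟨pi.comp φ, fun x y h => by
    have : φ x - φ y ∈ J := by rw [← map_sub]; exact hφ h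
    exact RingQuot.mkAlgHom_rel F this⟩

lemma tau_comp (φ : R →ₐ[F] R) (hφ : ∀ {x : R}, x ∈ J → φ x ∈ J) :
    (tau φ hφ).comp pi = pi.comp φ := by
  ext x
  exact RingQuot.liftAlgHom_mkAlgHom_apply _ _ _ _

/-- For every `x ∈ R`, the elements `T₁(T₁⁻(x)) − x`, `T₁⁻(T₁(x)) − x`, `T₂(T₂⁻(x)) − x` and
`T₂⁻(T₂(x)) − x` belong to `J`; consequently the induced endomorphisms `τ₁, τ₂` of `B = R/J`
are `F`-algebra automorphisms, with inverses induced by `T₁⁻` and `T₂⁻` respectively. -/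
theorem T_inverse_mod_J :
    (∀ x : R, T1 (T1inv x) - x ∈ J ∧ T1inv (T1 x) - x ∈ J ∧
              T2 (T2inv x) - x ∈ J ∧ T2inv (T2 x) - x ∈ J) ∧
    ∃ τ1 τ1inv τ2 τ2inv : B →ₐ[F] B,
      τ1.comp pi = pi.comp T1 ∧ τ1inv.comp pi = pi.comp T1inv ∧
      τ2.comp pi = pi.comp T2 ∧ τ2inv.comp pi = pi.comp T2inv ∧
      τ1.comp τ1inv = AlgHom.id F B ∧ τ1inv.comp τ1 = AlgHom.id F B ∧
      τ2.comp τ2inv = AlgHom.id F B ∧ τ2inv.comp τ2 = AlgHom.id F B := by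
  refine ⟨part1, tau T1 T1_J, tau T1inv T1inv_J, tau T2 T2_J, tau T2inv T2inv_J,
    tau_comp T1 T1_J, tau_comp T1inv T1inv_J, tau_comp T2 T2_J, tau_comp T2inv T2inv_J,
    ?_, ?_, ?_, ?_⟩ <;>
  · refine RingQuot.ringQuot_ext' F _ _ ?_
    show _ = (AlgHom.id F B).comp (RingQuot.mkAlgHom F _)
    rw [AlgHom.comp_assoc]
    show _ = (AlgHom.id F B).comp pi
    rw [show (RingQuot.mkAlgHom F fun x y : R => x - y ∈ J) = pi from rfl]
    rw [tau_comp, ← AlgHom.comp_assoc, tau_comp, AlgHom.comp_assoc, AlgHom.id_comp]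
    ext i
    fin_cases i <;>
      simp only [AlgHom.comp_apply] <;>
      exact RingQuot.mkAlgHom_rel F ((by
        first
        | exact (part1 _).1
        | exact (part1 _).2.1
        | exact (part1 _).2.2.1
        | exact (part1 _).2.2.2))
end
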